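/- If n ≥ 2m − 1 and m ≥ 2, then the game Z-domination number and the game L-domination number of the Cartesian product of complete graphs K_m and K_n both equal 2m − 1: γ_Zg(K_m □ K_n) = γ_Lg(K_m □ K_n) = 2m − 1. -/

import Mathlib

open Finset

open scoped Classical

noncomputable section

namespace ZGamePaper

variable {V : Type*} {W : Type*}

/-- The closed neighborhood `N[v]` of a vertex as a `Finset`. -/
def closedNF [Fintype V] (G : SimpleGraph V) (v : V) : Finset V :=
  Finset.univ.filter fun x => x = v ∨ G.Adj v x

/-- The open neighborhood `N(v)` of a vertex as a `Finset`. -/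
def openNF [Fintype V] (G : SimpleGraph V) (v : V) : Finset V :=
  Finset.univ.filter fun x => G.Adj v x

lemma openNF_subset_closedNF [Fintype V] (G : SimpleGraph V) (v : V) :
    openNF G v ⊆ closedNF G v := by
  intro x hx
  simp only [openNF, closedNF, mem_filter] at hx ⊢
  exact ⟨hx.1, Or.inr hx.2⟩

lemma measure_dec [Fintype V] {A C : Finset V} {w : V} (hw : w ∈ C) (hwA : w ∉ A) :
    (Finset.univ \ (A ∪ C)).card < (Finset.univ \ A).card := by
  apply Finset.card_lt_card
  rw [Finset.ssubset_iff_of_subset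
    (Finset.sdiff_subset_sdiff (le_refl _) Finset.subset_union_left)]
  refine ⟨w, ?_, ?_⟩
  · simp [hwA]
  · simp [hw]

/-! ### The Z-domination game -/

/-- The set of legal moves in the Z-domination game, given the set `A` of
already dominated vertices: a vertex `v` is legal if `N(v) ⊄ A`. -/
def zLegal [Fintype V] (G : SimpleGraph V) (A : Finset V) : Finset V :=
  Finset.univ.filter fun v => ¬ openNF G v ⊆ A

lemma zLegal_dec [Fintype V] (G : SimpleGraph V) (A : Finset V) {v : V}
    (hv : v ∈ zLegal G A) :
    (Finset.univ \ (A ∪ closedNF G v)).card < (Finset.univ \ A).card := by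
  simp only [zLegal, mem_filter] at hv
  obtain ⟨w, hw1, hw2⟩ := Finset.not_subset.mp hv.2
  exact measure_dec (openNF_subset_closedNF G v hw1) hw2

/-- The optimal number of remaining moves in the Z-domination game played on `G`,
where `A` is the set of already dominated vertices and `turn = true` iff it is
Dominator's (the minimizer's) turn. -/
def zVal [Fintype V] (G : SimpleGraph V) (turn : Bool) (A : Finset V) : ℕ :=
  if h : (zLegal G A).Nonempty then
    if turn then
      1 + ((zLegal G A).attach.inf' h.attach fun v => zVal G false (A ∪ closedNF G v.1))
    else
      1 + ((zLegal G A).attach.sup' h.attach fun v => zVal G true (A ∪ closedNF G v.1))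
  else 0
termination_by (Finset.univ \ A).card
decreasing_by
  · exact zLegal_dec G A v.2
  · exact zLegal_dec G A v.2

/-- The game Z-domination number `γ_Zg(G)` (Dominator starts). -/
def gammaZg [Fintype V] (G : SimpleGraph V) : ℕ := zVal G true ∅

/-- The Staller-start game Z-domination number `γ'_Zg(G)`. -/
def gammaZg' [Fintype V] (G : SimpleGraph V) : ℕ := zVal G false ∅

/-! ### The (ordinary) domination game -/

/-- The set of legal moves in the domination game: `v` is legal if `N[v] ⊄ A`.
This set is nonempty if and only if `A ≠ V(G)`. -/
def dLegal [Fintype V] (G : SimpleGraph V) (A : Finset V) : Finset V :=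
  Finset.univ.filter fun v => ¬ closedNF G v ⊆ A

lemma dLegal_dec [Fintype V] (G : SimpleGraph V) (A : Finset V) {v : V}
    (hv : v ∈ dLegal G A) :
    (Finset.univ \ (A ∪ closedNF G v)).card < (Finset.univ \ A).card := by
  simp only [dLegal, mem_filter] at hv
  obtain ⟨w, hw1, hw2⟩ := Finset.not_subset.mp hv.2
  exact measure_dec hw1 hw2

/-- The optimal number of remaining moves in the domination game on `G`, with `A`
the set of already dominated vertices; `turn = true` iff it is Dominator's turn.
(There is no legal move iff `A = V(G)`.) -/
def dVal [Fintype V] (G : SimpleGraph V) (turn : Bool) (A : Finset V) : ℕ :=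
  if h : (dLegal G A).Nonempty then
    if turn then
      1 + ((dLegal G A).attach.inf' h.attach fun v => dVal G false (A ∪ closedNF G v.1))
    else
      1 + ((dLegal G A).attach.sup' h.attach fun v => dVal G true (A ∪ closedNF G v.1))
  else 0
termination_by (Finset.univ \ A).card
decreasing_by
  · exact dLegal_dec G A v.2
  · exact dLegal_dec G A v.2

/-- The game domination number `γ_g(G)` (Dominator starts). -/
def gammaGg [Fintype V] (G : SimpleGraph V) : ℕ := dVal G true ∅

/-- The Staller-start game domination number `γ'_g(G)`. -/
def gammaGg' [Fintype V] (G : SimpleGraph V) : ℕ := dVal G false ∅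

/-! ### The total domination game -/

/-- The set of legal moves in the total domination game: `v` is legal if `N(v) ⊄ B`.
For a graph without isolated vertices this set is nonempty iff `B ≠ V(G)`. -/
def tLegal [Fintype V] (G : SimpleGraph V) (B : Finset V) : Finset V :=
  Finset.univ.filter fun v => ¬ openNF G v ⊆ B

lemma tLegal_dec [Fintype V] (G : SimpleGraph V) (B : Finset V) {v : V}
    (hv : v ∈ tLegal G B) :
    (Finset.univ \ (B ∪ openNF G v)).card < (Finset.univ \ B).card := by
  simp only [tLegal, mem_filter] at hv
  obtain ⟨w, hw1, hw2⟩ := Finset.not_subset.mp hv.2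
  exact measure_dec hw1 hw2

/-- The optimal number of remaining moves in the total domination game on `G`,
with `B` the set of already totally dominated vertices; `turn = true` iff it is
Dominator's turn. -/
def tVal [Fintype V] (G : SimpleGraph V) (turn : Bool) (B : Finset V) : ℕ :=
  if h : (tLegal G B).Nonempty then
    if turn then
      1 + ((tLegal G B).attach.inf' h.attach fun v => tVal G false (B ∪ openNF G v.1))
    else
      1 + ((tLegal G B).attach.sup' h.attach fun v => tVal G true (B ∪ openNF G v.1))
  else 0
termination_by (Finset.univ \ B).card
decreasing_by
  · exact tLegal_dec G B v.2
  · exact tLegal_dec G B v.2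

/-- The game total domination number `γ_tg(G)` (Dominator starts). -/
def gammaTg [Fintype V] (G : SimpleGraph V) : ℕ := tVal G true ∅

/-! ### The L-domination game -/

/-- The set of legal moves in the L-domination game, given the set `P` of vertices
played so far: `v` is legal if `v ∉ P` and `N[v] ⊄ N(P)`. -/
def lLegal [Fintype V] (G : SimpleGraph V) (P : Finset V) : Finset V :=
  Finset.univ.filter fun v => v ∉ P ∧ ¬ closedNF G v ⊆ P.biUnion (openNF G)

lemma lLegal_dec [Fintype V] (G : SimpleGraph V) (P : Finset V) {v : V}
    (hv : v ∈ lLegal G P) :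
    (Finset.univ \ insert v P).card < (Finset.univ \ P).card := by
  simp only [lLegal, mem_filter] at hv
  apply Finset.card_lt_card
  rw [Finset.ssubset_iff_of_subset
    (Finset.sdiff_subset_sdiff (le_refl _) (Finset.subset_insert _ _))]
  exact ⟨v, by simp [hv.2.1], by simp⟩

/-- The optimal number of remaining moves in the L-domination game on `G`, with `P`
the set of vertices played so far; `turn = true` iff it is Dominator's turn. -/
def lVal [Fintype V] (G : SimpleGraph V) (turn : Bool) (P : Finset V) : ℕ :=
  if h : (lLegal G P).Nonempty then
    if turn then
      1 + ((lLegal G P).attach.inf' h.attach fun v => lVal G false (insert v.1 P))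
    else
      1 + ((lLegal G P).attach.sup' h.attach fun v => lVal G true (insert v.1 P))
  else 0
termination_by (Finset.univ \ P).card
decreasing_by
  · exact lLegal_dec G P v.2
  · exact lLegal_dec G P v.2

/-- The game L-domination number `γ_Lg(G)` (Dominator starts). -/
def gammaLg [Fintype V] (G : SimpleGraph V) : ℕ := lVal G true ∅

/-! ### Domination number and related notions -/

/-- The domination number `γ(G)`: the minimum size of a set `S` with `N[S] = V(G)`. -/
def gammaNum [Fintype V] (G : SimpleGraph V) : ℕ :=
  sInf {k | ∃ S : Finset V, S.card = k ∧ ∀ v : V, ∃ u ∈ S, v ∈ closedNF G u}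

/-- The partially dominated graph `G|A` has a Z-configuration if there is an
undominated vertex `v` all of whose neighbors are dominated, while every neighbor
of `v` has at least two undominated neighbors. -/
def HasZConfig [Fintype V] (G : SimpleGraph V) (A : Finset V) : Prop :=
  ∃ v : V, v ∉ A ∧ openNF G v ⊆ A ∧ ∀ u ∈ openNF G v, 2 ≤ (openNF G u \ A).card

/-- A graph without isolated vertices is Z-insensitive if for every `D ⊆ V(G)` the
partially dominated graph `G|N[D]` has no Z-configuration. -/
def ZInsensitive [Fintype V] (G : SimpleGraph V) : Prop :=
  (∀ v : V, ∃ u : V, G.Adj v u) ∧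
    ∀ D : Finset V, ¬ HasZConfig G (D.biUnion (closedNF G))

/-- A vertex `w` is the center of a claw if it has three pairwise non-adjacent
neighbors. -/
def IsClawCenter (G : SimpleGraph V) (w : V) : Prop :=
  ∃ a b c : V, G.Adj w a ∧ G.Adj w b ∧ G.Adj w c ∧ a ≠ b ∧ a ≠ c ∧ b ≠ c ∧
    ¬ G.Adj a b ∧ ¬ G.Adj a c ∧ ¬ G.Adj b c

/-- A graph is weakly claw-free if every vertex has a neighbor that is not the
center of a claw. -/
def WeaklyClawFree (G : SimpleGraph V) : Prop :=
  ∀ v : V, ∃ u : V, G.Adj v u ∧ ¬ IsClawCenter G u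

/-- The lexicographic product `G ∘ H`. -/
def lexProd (G : SimpleGraph V) (H : SimpleGraph W) : SimpleGraph (V × W) where
  Adj p q := G.Adj p.1 q.1 ∨ (p.1 = q.1 ∧ H.Adj p.2 q.2)
  symm := by
    refine ⟨?_⟩
    rintro p q (h | ⟨h1, h2⟩)
    · exact Or.inl h.symm
    · exact Or.inr ⟨h1.symm, h2.symm⟩
  loopless := by
    refine ⟨?_⟩
    rintro p (h | ⟨_, h⟩)
    · exact G.loopless.irrefl _ h
    · exact H.loopless.irrefl _ h


/-! ### Auxiliary API for the game values -/

section API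

variable [Fintype V] {G : SimpleGraph V}

lemma zVal_of_empty {A : Finset V} (h : ¬ (zLegal G A).Nonempty) (t : Bool) :
    zVal G t A = 0 := by
  rw [zVal, dif_neg h]

lemma zVal_true_le {A : Finset V} {v : V} (hv : v ∈ zLegal G A) :
    zVal G true A ≤ 1 + zVal G false (A ∪ closedNF G v) := by
  rw [zVal, dif_pos ⟨v, hv⟩, if_pos rfl]
  exact Nat.add_le_add_left (Finset.inf'_le _ (Finset.mem_attach _ ⟨v, hv⟩)) 1

lemma zVal_false_le {A : Finset V} {k : ℕ}
    (h : ∀ v ∈ zLegal G A, zVal G true (A ∪ closedNF G v) ≤ k) :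
    zVal G false A ≤ 1 + k := by
  by_cases h1 : (zLegal G A).Nonempty
  · conv_lhs => rw [zVal, dif_pos h1, if_neg (by simp)]
    refine Nat.add_le_add_left ?_ 1
    apply Finset.sup'_le
    rintro ⟨v, hv⟩ -
    exact h v hv
  · rw [zVal_of_empty h1]
    omega

lemma zVal_false_ge {A : Finset V} {v : V} (hv : v ∈ zLegal G A) :
    1 + zVal G true (A ∪ closedNF G v) ≤ zVal G false A := by
  conv_rhs => rw [zVal, dif_pos ⟨v, hv⟩, if_neg (by simp)]
  exact Nat.add_le_add_left
    (Finset.le_sup' (f := fun w : {x // x ∈ zLegal G A} => zVal G true (A ∪ closedNF G w.1))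
      (Finset.mem_attach _ ⟨v, hv⟩)) 1

lemma zVal_true_ge {A : Finset V} {k : ℕ} (hne : (zLegal G A).Nonempty)
    (h : ∀ v ∈ zLegal G A, k ≤ zVal G false (A ∪ closedNF G v)) :
    1 + k ≤ zVal G true A := by
  conv_rhs => rw [zVal, dif_pos hne, if_pos rfl]
  refine Nat.add_le_add_left ?_ 1
  apply Finset.le_inf'
  rintro ⟨v, hv⟩ -
  exact h v hv

lemma lVal_of_empty {P : Finset V} (h : ¬ (lLegal G P).Nonempty) (t : Bool) :
    lVal G t P = 0 := by
  rw [lVal, dif_neg h]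

lemma lVal_true_le {P : Finset V} {v : V} (hv : v ∈ lLegal G P) :
    lVal G true P ≤ 1 + lVal G false (insert v P) := by
  rw [lVal, dif_pos ⟨v, hv⟩, if_pos rfl]
  exact Nat.add_le_add_left (Finset.inf'_le _ (Finset.mem_attach _ ⟨v, hv⟩)) 1

lemma lVal_false_le {P : Finset V} {k : ℕ}
    (h : ∀ v ∈ lLegal G P, lVal G true (insert v P) ≤ k) :
    lVal G false P ≤ 1 + k := by
  by_cases h1 : (lLegal G P).Nonempty
  · conv_lhs => rw [lVal, dif_pos h1, if_neg (by simp)]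
    refine Nat.add_le_add_left ?_ 1
    apply Finset.sup'_le
    rintro ⟨v, hv⟩ -
    exact h v hv
  · rw [lVal_of_empty h1]
    omega

lemma lVal_false_ge {P : Finset V} {v : V} (hv : v ∈ lLegal G P) :
    1 + lVal G true (insert v P) ≤ lVal G false P := by
  conv_rhs => rw [lVal, dif_pos ⟨v, hv⟩, if_neg (by simp)]
  exact Nat.add_le_add_left
    (Finset.le_sup' (f := fun w : {x // x ∈ lLegal G P} => lVal G true (insert w.1 P))
      (Finset.mem_attach _ ⟨v, hv⟩)) 1

lemma lVal_true_ge {P : Finset V} {k : ℕ} (hne : (lLegal G P).Nonempty)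
    (h : ∀ v ∈ lLegal G P, k ≤ lVal G false (insert v P)) :
    1 + k ≤ lVal G true P := by
  conv_rhs => rw [lVal, dif_pos hne, if_pos rfl]
  refine Nat.add_le_add_left ?_ 1
  apply Finset.le_inf'
  rintro ⟨v, hv⟩ -
  exact h v hv

lemma mem_zLegal [Fintype V] {G : SimpleGraph V} {A : Finset V} {v : V} :
    v ∈ zLegal G A ↔ ¬ openNF G v ⊆ A := by
  simp [zLegal]

lemma mem_lLegal [Fintype V] {G : SimpleGraph V} {P : Finset V} {v : V} :
    v ∈ lLegal G P ↔ v ∉ P ∧ ¬ closedNF G v ⊆ P.biUnion (openNF G) := by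
  simp [lLegal]

lemma zLegal_not_nonempty_of_full [Fintype V] {G : SimpleGraph V} {A : Finset V}
    (h : ∀ x, x ∈ A) : ¬ (zLegal G A).Nonempty := by
  rintro ⟨v, hv⟩
  exact (mem_zLegal.mp hv) fun x _ => h x

end API

/-! ### The rook's graph -/

section Rook

/-- A local `DecidableEq` instance chosen to agree syntactically with the instance
used in the abstract lemmas above (via `Classical`). -/
private abbrev pdec (m n : ℕ) : DecidableEq (Fin m × Fin n) :=
  fun a b => Classical.propDecidable (a = b)

attribute [local instance 2000] pdec

variable {m n : ℕ}

/-- Local abbreviation for the rook's graph `K_m □ K_n`. -/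
private def KK (m n : ℕ) : SimpleGraph (Fin m × Fin n) :=
  (⊤ : SimpleGraph (Fin m)).boxProd (⊤ : SimpleGraph (Fin n))

lemma KK_adj {x v : Fin m × Fin n} :
    (KK m n).Adj v x ↔ (x.1 = v.1 ∨ x.2 = v.2) ∧ x ≠ v := by
  rw [KK, SimpleGraph.boxProd_adj]
  simp only [SimpleGraph.top_adj, ne_eq, Prod.ext_iff, not_and]
  constructor
  · rintro (⟨h1, h2⟩ | ⟨h1, h2⟩)
    · exact ⟨Or.inr h2.symm, fun ha _ => h1 ha.symm⟩
    · exact ⟨Or.inl h2.symm, fun _ hb => h1 hb.symm⟩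
  · rintro ⟨h1 | h1, h2⟩
    · exact Or.inr ⟨fun hb => h2 h1 hb.symm, h1.symm⟩
    · exact Or.inl ⟨fun ha => h2 ha.symm h1, h1.symm⟩

lemma mem_closedNF_KK {x v : Fin m × Fin n} :
    x ∈ closedNF (KK m n) v ↔ x.1 = v.1 ∨ x.2 = v.2 := by
  simp only [closedNF, mem_filter, mem_univ, true_and, KK_adj]
  constructor
  · rintro (rfl | ⟨h, _⟩)
    · exact Or.inl rfl
    · exact h
  · intro h
    by_cases hx : x = v
    · exact Or.inl hx
    · exact Or.inr ⟨h, hx⟩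

lemma mem_openNF_KK {x v : Fin m × Fin n} :
    x ∈ openNF (KK m n) v ↔ (x.1 = v.1 ∨ x.2 = v.2) ∧ x ≠ v := by
  simp only [openNF, mem_filter, mem_univ, true_and, KK_adj]

private lemma zdec {A : Finset (Fin m × Fin n)} {v : Fin m × Fin n}
    (hv : v ∈ zLegal (KK m n) A) :
    (univ \ (A ∪ closedNF (KK m n) v)).card < (univ \ A).card := by
  obtain ⟨x, hx1, hx2⟩ := Finset.not_subset.mp (mem_zLegal.mp hv)
  apply Finset.card_lt_card
  rw [Finset.ssubset_iff_of_subset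
    (Finset.sdiff_subset_sdiff (le_refl _) Finset.subset_union_left)]
  refine ⟨x, by simp [hx2], by simp [openNF_subset_closedNF (KK m n) v hx1]⟩

private lemma ldec {P : Finset (Fin m × Fin n)} {v : Fin m × Fin n}
    (hv : v ∈ lLegal (KK m n) P) :
    (univ \ insert v P).card < (univ \ P).card := by
  apply Finset.card_lt_card
  rw [Finset.ssubset_iff_of_subset
    (Finset.sdiff_subset_sdiff (le_refl _) (Finset.subset_insert _ _))]
  refine ⟨v, by simp [(mem_lLegal.mp hv).1], by simp⟩

end Rook

/-! ### Z-game: upper bound -/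

section ZUp

attribute [local instance 2000] pdec

variable {m n : ℕ}

/-- The number of rows that are not yet fully dominated. -/
private def uZ (A : Finset (Fin m × Fin n)) : ℕ :=
  (univ.filter fun i : Fin m => ∃ j, (i, j) ∉ A).card

private lemma uZ_mono {A B : Finset (Fin m × Fin n)} (h : A ⊆ B) : uZ B ≤ uZ A := by
  apply Finset.card_le_card
  intro i hi
  simp only [mem_filter, mem_univ, true_and] at hi ⊢
  obtain ⟨j, hj⟩ := hi
  exact ⟨j, fun hmem => hj (h hmem)⟩

private lemma full_of_uZ_zero {A : Finset (Fin m × Fin n)} (h : uZ A = 0)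
    (x : Fin m × Fin n) : x ∈ A := by
  by_contra hx
  have hmem : x.1 ∈ univ.filter fun i : Fin m => ∃ j, (i, j) ∉ A := by
    simp only [mem_filter, mem_univ, true_and]
    exact ⟨x.2, by simpa using hx⟩
  rw [uZ, Finset.card_eq_zero] at h
  simp [h] at hmem

private lemma zUp (hn2 : 2 ≤ n) :
    ∀ (k : ℕ) (A : Finset (Fin m × Fin n)), (univ \ A).card ≤ k →
      zVal (KK m n) true A ≤ 2 * uZ A - 1 ∧ zVal (KK m n) false A ≤ 2 * uZ A := by
  intro k
  induction k with
  | zero =>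
    intro A hA
    have hfull : ∀ x, x ∈ A := by
      intro x
      by_contra hx
      have : x ∈ univ \ A := by simp [hx]
      have := Finset.card_pos.mpr ⟨x, this⟩
      omega
    rw [zVal_of_empty (zLegal_not_nonempty_of_full hfull),
      zVal_of_empty (zLegal_not_nonempty_of_full hfull)]
    omega
  | succ k ih =>
    intro A hA
    constructor
    · by_cases hne : (zLegal (KK m n) A).Nonempty
      · obtain ⟨w, hw⟩ := hne
        obtain ⟨x, hx1, hx2⟩ := Finset.not_subset.mp (mem_zLegal.mp hw)
        haveI : Nontrivial (Fin n) :=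
          ⟨⟨⟨0, by omega⟩, ⟨1, by omega⟩, by simp [Fin.ext_iff]⟩⟩
        obtain ⟨j1, hj1⟩ := exists_ne x.2
        set v : Fin m × Fin n := (x.1, j1) with hv_def
        have hxv : x ∈ openNF (KK m n) v := by
          rw [mem_openNF_KK]
          refine ⟨Or.inl rfl, fun hxe => hj1 ?_⟩
          rw [hxe]
        have hv : v ∈ zLegal (KK m n) A :=
          mem_zLegal.mpr (Finset.not_subset.mpr ⟨x, hxv, hx2⟩)
        have hmeas := zdec hv
        have hrec := (ih (A ∪ closedNF (KK m n) v) (by omega)).2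
        have hiu : x.1 ∈ univ.filter fun i : Fin m => ∃ j, (i, j) ∉ A := by
          simp only [mem_filter, mem_univ, true_and]
          exact ⟨x.2, by simpa using hx2⟩
        have hsub : (univ.filter fun i : Fin m => ∃ j, (i, j) ∉ A ∪ closedNF (KK m n) v) ⊆
            (univ.filter fun i : Fin m => ∃ j, (i, j) ∉ A).erase x.1 := by
          intro i hi
          simp only [mem_filter, mem_univ, true_and, Finset.mem_union, not_or,
            Finset.mem_erase] at hi ⊢
          obtain ⟨j, hj1', hj2'⟩ := hi
          refine ⟨fun hie => hj2' (mem_closedNF_KK.mpr (Or.inl hie)), j, hj1'⟩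
        have hcard : uZ (A ∪ closedNF (KK m n) v) ≤ uZ A - 1 := by
          have h1 := Finset.card_le_card hsub
          have h2 := Finset.card_erase_of_mem hiu
          rw [uZ, uZ]
          omega
        have hpos : 1 ≤ uZ A := Finset.card_pos.mpr ⟨x.1, hiu⟩
        have := zVal_true_le hv
        omega
      · rw [zVal_of_empty hne]
        omega
    · by_cases hu : uZ A = 0
      · rw [zVal_of_empty (zLegal_not_nonempty_of_full (full_of_uZ_zero hu))]
        omega
      · refine le_trans (zVal_false_le (k := 2 * uZ A - 1) ?_) (by omega)
        intro v hv
        have hmeas := zdec hv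
        have hrec := (ih (A ∪ closedNF (KK m n) v) (by omega)).1
        have hmono : uZ (A ∪ closedNF (KK m n) v) ≤ uZ A :=
          uZ_mono Finset.subset_union_left
        omega

end ZUp

/-! ### Z-game: lower bound -/

section ZLow

attribute [local instance 2000] pdec

variable {m n : ℕ}

private lemma union_closed_eq (S : Finset (Fin m)) (T : Finset (Fin n))
    (v : Fin m × Fin n) :
    (univ \ S ×ˢ T) ∪ closedNF (KK m n) v = univ \ (S.erase v.1 ×ˢ T.erase v.2) := by
  ext x
  simp only [Finset.mem_union, Finset.mem_sdiff, mem_univ, true_and, Finset.mem_product,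
    Finset.mem_erase, mem_closedNF_KK]
  constructor
  · rintro (h | h)
    · rintro ⟨⟨-, h1⟩, -, h2⟩
      exact h ⟨h1, h2⟩
    · rintro ⟨⟨hx1, -⟩, hx2, -⟩
      rcases h with h | h
      · exact hx1 h
      · exact hx2 h
  · intro h
    by_cases h1 : x.1 = v.1
    · exact Or.inr (Or.inl h1)
    · by_cases h2 : x.2 = v.2
      · exact Or.inr (Or.inr h2)
      · exact Or.inl fun hc => h ⟨⟨h1, hc.1⟩, h2, hc.2⟩

private lemma mem_grid_undom {S : Finset (Fin m)} {T : Finset (Fin n)}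
    {x : Fin m × Fin n} : x ∉ (univ \ S ×ˢ T) ↔ x.1 ∈ S ∧ x.2 ∈ T := by
  simp [Finset.mem_product]

private lemma zLow (hn2 : 2 ≤ n) :
    ∀ (k : ℕ) (S : Finset (Fin m)) (T : Finset (Fin n)), (S ×ˢ T).card ≤ k →
      (min (2 * S.card - 1) T.card ≤ zVal (KK m n) true (univ \ S ×ˢ T)) ∧
      (∀ i0 : Fin m, i0 ∉ S →
        min (2 * S.card) T.card ≤ zVal (KK m n) false (univ \ S ×ˢ T)) := by
  intro k
  induction k with
  | zero =>
    intro S T hk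
    rcases S.eq_empty_or_nonempty with rfl | hS
    · simp
    rcases T.eq_empty_or_nonempty with rfl | hT
    · simp
    exfalso
    obtain ⟨i, hi⟩ := hS
    obtain ⟨j, hj⟩ := hT
    have : (i, j) ∈ S ×ˢ T := Finset.mem_product.mpr ⟨hi, hj⟩
    have := Finset.card_pos.mpr ⟨(i, j), this⟩
    omega
  | succ k ih =>
    intro S T hk
    rcases S.eq_empty_or_nonempty with rfl | hS
    · constructor
      · simp
      · intro i0 _
        simp
    rcases T.eq_empty_or_nonempty with rfl | hT
    · simp
    obtain ⟨i, hi⟩ := hS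
    obtain ⟨j, hj⟩ := hT
    have hScard : 1 ≤ S.card := Finset.card_pos.mpr ⟨i, hi⟩
    have hTcard : 1 ≤ T.card := Finset.card_pos.mpr ⟨j, hj⟩
    constructor
    · -- Dominator to move
      haveI : Nontrivial (Fin n) :=
        ⟨⟨⟨0, by omega⟩, ⟨1, by omega⟩, by simp [Fin.ext_iff]⟩⟩
      obtain ⟨j1, hj1⟩ := exists_ne j
      have hijundom : ((i, j) : Fin m × Fin n) ∉ (univ \ S ×ˢ T) :=
        mem_grid_undom.mpr ⟨hi, hj⟩
      have hw : ((i, j1) : Fin m × Fin n) ∈ zLegal (KK m n) (univ \ S ×ˢ T) := by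
        refine mem_zLegal.mpr (Finset.not_subset.mpr ⟨(i, j), ?_, hijundom⟩)
        rw [mem_openNF_KK]
        exact ⟨Or.inl rfl, fun h => hj1 (congrArg Prod.snd h).symm⟩
      have hne : (zLegal (KK m n) (univ \ S ×ˢ T)).Nonempty := ⟨_, hw⟩
      have key : ∀ v ∈ zLegal (KK m n) (univ \ S ×ˢ T),
          min (2 * S.card - 1) T.card - 1 ≤
            zVal (KK m n) false ((univ \ S ×ˢ T) ∪ closedNF (KK m n) v) := by
        intro v hv
        obtain ⟨x, hx1, hx2⟩ := Finset.not_subset.mp (mem_zLegal.mp hv)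
        obtain ⟨hxS, hxT⟩ := mem_grid_undom.mp hx2
        obtain ⟨hor, -⟩ := mem_openNF_KK.mp hx1
        have hss : S.erase v.1 ×ˢ T.erase v.2 ⊂ S ×ˢ T := by
          refine Finset.ssubset_iff_of_subset
            (Finset.product_subset_product (Finset.erase_subset _ _)
              (Finset.erase_subset _ _)) |>.mpr ⟨x, Finset.mem_product.mpr ⟨hxS, hxT⟩, ?_⟩
          rw [Finset.mem_product]
          rintro ⟨hx3, hx4⟩
          rcases hor with h | h
          · exact (Finset.mem_erase.mp hx3).1 h
          · exact (Finset.mem_erase.mp hx4).1 h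
        have hcard := Finset.card_lt_card hss
        have hrec := (ih (S.erase v.1) (T.erase v.2) (by omega)).2 v.1
          (fun hmem => (Finset.mem_erase.mp hmem).1 rfl)
        rw [union_closed_eq]
        refine le_trans ?_ hrec
        have h1 : S.card - 1 ≤ (S.erase v.1).card := Finset.pred_card_le_card_erase
        have h2 : T.card - 1 ≤ (T.erase v.2).card := Finset.pred_card_le_card_erase
        omega
      have := zVal_true_ge hne key
      omega
    · -- Staller to move
      intro i0 hi0
      have hilegal : ((i0, j) : Fin m × Fin n) ∈ zLegal (KK m n) (univ \ S ×ˢ T) := by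
        refine mem_zLegal.mpr (Finset.not_subset.mpr
          ⟨(i, j), ?_, mem_grid_undom.mpr ⟨hi, hj⟩⟩)
        rw [mem_openNF_KK]
        refine ⟨Or.inr rfl, fun h => hi0 ?_⟩
        injection h with h1 _
        exact h1 ▸ hi
      have hstep := zVal_false_ge hilegal
      have hunion : (univ \ S ×ˢ T) ∪ closedNF (KK m n) (i0, j) =
          univ \ (S ×ˢ T.erase j) := by
        rw [union_closed_eq]
        simp [Finset.erase_eq_of_notMem hi0]
      rw [hunion] at hstep
      have hss : S ×ˢ T.erase j ⊂ S ×ˢ T := by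
        refine Finset.ssubset_iff_of_subset
          (Finset.product_subset_product (le_refl _) (Finset.erase_subset _ _)) |>.mpr
          ⟨(i, j), Finset.mem_product.mpr ⟨hi, hj⟩, ?_⟩
        rw [Finset.mem_product]
        rintro ⟨-, hx4⟩
        exact (Finset.mem_erase.mp hx4).1 rfl
      have hcard := Finset.card_lt_card hss
      have hrec := (ih S (T.erase j) (by omega)).1
      have h2 : (T.erase j).card = T.card - 1 := Finset.card_erase_of_mem hj
      omega

end ZLow

/-! ### L-game: upper bound -/

section LUp

attribute [local instance 2000] pdec

variable {m n : ℕ}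

/-- The number of rows whose column-`j0` vertex has not been played. -/
private def uL (j0 : Fin n) (P : Finset (Fin m × Fin n)) : ℕ :=
  (univ.filter fun i : Fin m => (i, j0) ∉ P).card

private lemma lLegal_not_nonempty_of_full {P : Finset (Fin m × Fin n)}
    (h : ∀ x, x ∈ P) : ¬ (lLegal (KK m n) P).Nonempty := by
  rintro ⟨v, hv⟩
  exact (mem_lLegal.mp hv).1 (h v)

private lemma np_univ (hm : 2 ≤ m) (j0 : Fin n) {P : Finset (Fin m × Fin n)}
    (h : ∀ i : Fin m, (i, j0) ∉ P →
      closedNF (KK m n) (i, j0) ⊆ P.biUnion (openNF (KK m n)))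
    (hful : ∀ i : Fin m, (i, j0) ∈ P → True) :
    ∀ x : Fin m × Fin n, x ∈ P.biUnion (openNF (KK m n)) := by
  by_cases hA : ∃ i : Fin m, (i, j0) ∉ P
  · obtain ⟨iw, hiw⟩ := hA
    intro x
    by_cases hx : (x.1, j0) ∈ P
    · by_cases hxj : x.2 = j0
      · exact h iw hiw (mem_closedNF_KK.mpr (Or.inr hxj))
      · refine Finset.mem_biUnion.mpr ⟨(x.1, j0), hx, mem_openNF_KK.mpr ⟨Or.inl rfl, ?_⟩⟩
        intro he
        exact hxj (congrArg Prod.snd he)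
    · exact h x.1 hx (mem_closedNF_KK.mpr (Or.inl rfl))
  · push_neg at hA
    intro x
    by_cases hxj : x.2 = j0
    · haveI : Nontrivial (Fin m) :=
        ⟨⟨⟨0, by omega⟩, ⟨1, by omega⟩, by simp [Fin.ext_iff]⟩⟩
      obtain ⟨i', hi'⟩ := exists_ne x.1
      refine Finset.mem_biUnion.mpr ⟨(i', j0), hA i', mem_openNF_KK.mpr ⟨Or.inr hxj, ?_⟩⟩
      intro he
      exact hi' (congrArg Prod.fst he).symm
    · refine Finset.mem_biUnion.mpr ⟨(x.1, j0), hA x.1, mem_openNF_KK.mpr ⟨Or.inl rfl, ?_⟩⟩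
      intro he
      exact hxj (congrArg Prod.snd he)

private lemma lLegal_not_nonempty_of_np_univ {P : Finset (Fin m × Fin n)}
    (h : ∀ x : Fin m × Fin n, x ∈ P.biUnion (openNF (KK m n))) :
    ¬ (lLegal (KK m n) P).Nonempty := by
  rintro ⟨v, hv⟩
  exact (mem_lLegal.mp hv).2 fun x _ => h x

private lemma lUp (hm : 2 ≤ m) (j0 : Fin n) :
    ∀ (k : ℕ) (P : Finset (Fin m × Fin n)), (univ \ P).card ≤ k →
      lVal (KK m n) true P ≤ 2 * uL j0 P - 1 ∧ lVal (KK m n) false P ≤ 2 * uL j0 P := by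
  intro k
  induction k with
  | zero =>
    intro P hP
    have hfull : ∀ x, x ∈ P := by
      intro x
      by_contra hx
      have : x ∈ univ \ P := by simp [hx]
      have := Finset.card_pos.mpr ⟨x, this⟩
      omega
    rw [lVal_of_empty (lLegal_not_nonempty_of_full hfull),
      lVal_of_empty (lLegal_not_nonempty_of_full hfull)]
    omega
  | succ k ih =>
    intro P hP
    constructor
    · by_cases hne : (lLegal (KK m n) P).Nonempty
      · have hex : ∃ i : Fin m, (i, j0) ∉ P ∧ (i, j0) ∈ lLegal (KK m n) P := by
          by_contra hno
          push_neg at hno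
          have h : ∀ i : Fin m, (i, j0) ∉ P →
              closedNF (KK m n) (i, j0) ⊆ P.biUnion (openNF (KK m n)) := by
            intro i hi
            have := hno i hi
            rw [mem_lLegal] at this
            push_neg at this
            exact this hi
          exact lLegal_not_nonempty_of_np_univ (np_univ hm j0 h fun _ _ => trivial) hne
        obtain ⟨i, hiP, hileg⟩ := hex
        have hmeas := ldec hileg
        have hrec := (ih (insert (i, j0) P) (by omega)).2
        have hiu : i ∈ univ.filter fun i' : Fin m => (i', j0) ∉ P := by
          simp only [mem_filter, mem_univ, true_and]
          exact hiP
        have hsub : (univ.filter fun i' : Fin m => (i', j0) ∉ insert (i, j0) P) ⊆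
            (univ.filter fun i' : Fin m => (i', j0) ∉ P).erase i := by
          intro i' hi'
          simp only [mem_filter, mem_univ, true_and, Finset.mem_insert, not_or,
            Finset.mem_erase] at hi' ⊢
          refine ⟨fun hie => hi'.1 (by rw [hie]), hi'.2⟩
        have hcard : uL j0 (insert (i, j0) P) ≤ uL j0 P - 1 := by
          have h1 := Finset.card_le_card hsub
          have h2 := Finset.card_erase_of_mem hiu
          rw [uL, uL]
          omega
        have hpos : 1 ≤ uL j0 P := Finset.card_pos.mpr ⟨i, hiu⟩
        have := lVal_true_le hileg
        omega
      · rw [lVal_of_empty hne]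
        omega
    · by_cases hu : uL j0 P = 0
      · have hfull : ∀ i : Fin m, (i, j0) ∈ P := by
          intro i
          by_contra hi
          have hmem : i ∈ univ.filter fun i' : Fin m => (i', j0) ∉ P := by
            simp only [mem_filter, mem_univ, true_and]; exact hi
          rw [uL, Finset.card_eq_zero] at hu
          simp [hu] at hmem
        have h : ∀ i : Fin m, (i, j0) ∉ P →
            closedNF (KK m n) (i, j0) ⊆ P.biUnion (openNF (KK m n)) :=
          fun i hi => absurd (hfull i) hi
        rw [lVal_of_empty (lLegal_not_nonempty_of_np_univ
          (np_univ hm j0 h fun _ _ => trivial))]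
        omega
      · refine le_trans (lVal_false_le (k := 2 * uL j0 P - 1) ?_) (by omega)
        intro v hv
        have hmeas := ldec hv
        have hrec := (ih (insert v P) (by omega)).1
        have hmono : uL j0 (insert v P) ≤ uL j0 P := by
          apply Finset.card_le_card
          intro i hi
          simp only [mem_filter, mem_univ, true_and, Finset.mem_insert, not_or] at hi ⊢
          exact hi.2
        omega

end LUp

/-! ### L-game: lower bound -/

section LLow

attribute [local instance 2000] pdec

variable {m n : ℕ}

private def rhoL (P : Finset (Fin m × Fin n)) : ℕ := (P.image Prod.fst).card

private def kapL (P : Finset (Fin m × Fin n)) : ℕ := (P.image Prod.snd).card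

private lemma rhoL_insert_le (P : Finset (Fin m × Fin n)) (v : Fin m × Fin n) :
    rhoL (insert v P) ≤ rhoL P + 1 := by
  rw [rhoL, rhoL, Finset.image_insert]
  exact Finset.card_insert_le _ _

private lemma kapL_insert_le (P : Finset (Fin m × Fin n)) (v : Fin m × Fin n) :
    kapL (insert v P) ≤ kapL P + 1 := by
  rw [kapL, kapL, Finset.image_insert]
  exact Finset.card_insert_le _ _

private lemma not_mem_np {P : Finset (Fin m × Fin n)} {x : Fin m × Fin n}
    (h1 : x.1 ∉ P.image Prod.fst) (h2 : x.2 ∉ P.image Prod.snd) :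
    x ∉ P.biUnion (openNF (KK m n)) := by
  intro hx
  obtain ⟨p, hp, hxp⟩ := Finset.mem_biUnion.mp hx
  obtain ⟨hor, -⟩ := mem_openNF_KK.mp hxp
  rcases hor with h | h
  · exact h1 (Finset.mem_image.mpr ⟨p, hp, h.symm⟩)
  · exact h2 (Finset.mem_image.mpr ⟨p, hp, h.symm⟩)

private lemma exists_not_mem_of_card_lt {α : Type*} [Fintype α] {s : Finset α}
    (h : s.card < Fintype.card α) : ∃ a, a ∉ s := by
  by_contra hno
  push_neg at hno
  have : s = univ := Finset.eq_univ_iff_forall.mpr hno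
  rw [this, Finset.card_univ] at h
  omega

private lemma lLow (hm : 2 ≤ m) :
    ∀ (k : ℕ) (P : Finset (Fin m × Fin n)), (univ \ P).card ≤ k →
      (min (2 * (m - rhoL P) - 1) (n - kapL P) ≤ lVal (KK m n) true P) ∧
      (P.Nonempty → min (2 * (m - rhoL P)) (n - kapL P) ≤ lVal (KK m n) false P) := by
  intro k
  induction k with
  | zero =>
    intro P hP
    have hfull : ∀ x, x ∈ P := by
      intro x
      by_contra hx
      have : x ∈ univ \ P := by simp [hx]
      have := Finset.card_pos.mpr ⟨x, this⟩
      omega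
    have hkap : n ≤ kapL P := by
      rw [kapL]
      have : (univ : Finset (Fin n)) ⊆ P.image Prod.snd := by
        intro j _
        exact Finset.mem_image.mpr ⟨(⟨0, by omega⟩, j), hfull _, rfl⟩
      have := Finset.card_le_card this
      simpa using this
    constructor
    · omega
    · intro _
      omega
  | succ k ih =>
    intro P hP
    constructor
    · -- Dominator to move
      by_cases hcase : rhoL P < m ∧ kapL P < n
      · obtain ⟨hρ, hκ⟩ := hcase
        obtain ⟨i0, hi0⟩ : ∃ i, i ∉ P.image Prod.fst :=
          exists_not_mem_of_card_lt (by simpa [rhoL] using hρ)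
        obtain ⟨j0, hj0⟩ : ∃ j, j ∉ P.image Prod.snd :=
          exists_not_mem_of_card_lt (by simpa [kapL] using hκ)
        have hvnp : ((i0, j0) : Fin m × Fin n) ∉ P.biUnion (openNF (KK m n)) :=
          not_mem_np hi0 hj0
        have hvP : ((i0, j0) : Fin m × Fin n) ∉ P := by
          intro hmem
          exact hi0 (Finset.mem_image.mpr ⟨_, hmem, rfl⟩)
        have hleg : ((i0, j0) : Fin m × Fin n) ∈ lLegal (KK m n) P := by
          refine mem_lLegal.mpr ⟨hvP, fun hsub => hvnp (hsub ?_)⟩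
          exact mem_closedNF_KK.mpr (Or.inl rfl)
        have hne : (lLegal (KK m n) P).Nonempty := ⟨_, hleg⟩
        have key : ∀ w ∈ lLegal (KK m n) P,
            min (2 * (m - rhoL P) - 1) (n - kapL P) - 1 ≤
              lVal (KK m n) false (insert w P) := by
          intro w hw
          have hmeas := ldec hw
          have hrec := (ih (insert w P) (by omega)).2 ⟨w, Finset.mem_insert_self _ _⟩
          have h1 := rhoL_insert_le P w
          have h2 := kapL_insert_le P w
          omega
        have := lVal_true_ge hne key
        omega
      · rw [not_and_or] at hcase
        rcases hcase with h | h <;> omega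
    · -- Staller to move
      intro hPne
      by_cases hcase : rhoL P < m ∧ kapL P < n
      · obtain ⟨hρ, hκ⟩ := hcase
        obtain ⟨p, hp⟩ := hPne
        obtain ⟨i0, hi0⟩ : ∃ i, i ∉ P.image Prod.fst :=
          exists_not_mem_of_card_lt (by simpa [rhoL] using hρ)
        obtain ⟨j1, hj1⟩ : ∃ j, j ∉ P.image Prod.snd :=
          exists_not_mem_of_card_lt (by simpa [kapL] using hκ)
        have hwP : ((p.1, j1) : Fin m × Fin n) ∉ P := by
          intro hmem
          exact hj1 (Finset.mem_image.mpr ⟨_, hmem, rfl⟩)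
        have hxnp : ((i0, j1) : Fin m × Fin n) ∉ P.biUnion (openNF (KK m n)) :=
          not_mem_np hi0 hj1
        have hleg : ((p.1, j1) : Fin m × Fin n) ∈ lLegal (KK m n) P := by
          refine mem_lLegal.mpr ⟨hwP, fun hsub => hxnp (hsub ?_)⟩
          exact mem_closedNF_KK.mpr (Or.inr rfl)
        have hstep := lVal_false_ge hleg
        have hmeas := ldec hleg
        have hrec := (ih (insert (p.1, j1) P) (by omega)).1
        have hρeq : rhoL (insert (p.1, j1) P) = rhoL P := by
          rw [rhoL, rhoL, Finset.image_insert]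
          congr 1
          exact Finset.insert_eq_self.mpr (Finset.mem_image.mpr ⟨p, hp, rfl⟩)
        have hκle := kapL_insert_le P (p.1, j1)
        rw [hρeq] at hrec
        omega
      · rw [not_and_or] at hcase
        rcases hcase with h | h <;> omega

end LLow

section Final

attribute [local instance 2000] pdec

/-- If `n ≥ 2m - 1` and `m ≥ 2`, then
`γ_Zg(K_m □ K_n) = γ_Lg(K_m □ K_n) = 2m - 1`. -/
theorem gammaZg_gammaLg_boxProd_complete (m n : ℕ) (hm : 2 ≤ m) (hn : 2 * m - 1 ≤ n) :
    gammaZg ((⊤ : SimpleGraph (Fin m)).boxProd (⊤ : SimpleGraph (Fin n))) = 2 * m - 1 ∧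
    gammaLg ((⊤ : SimpleGraph (Fin m)).boxProd (⊤ : SimpleGraph (Fin n))) = 2 * m - 1 := by
  have hn2 : 2 ≤ n := by omega
  have hG : (⊤ : SimpleGraph (Fin m)).boxProd (⊤ : SimpleGraph (Fin n)) = KK m n := rfl
  rw [hG, gammaZg, gammaLg]
  -- Z-game, upper bound
  have hzu := (zUp hn2 ((univ \ (∅ : Finset (Fin m × Fin n))).card) ∅ le_rfl).1
  have huZ : uZ (∅ : Finset (Fin m × Fin n)) = m := by
    rw [uZ]
    have he : (univ.filter fun i : Fin m =>
        ∃ j : Fin n, (i, j) ∉ (∅ : Finset (Fin m × Fin n))) = univ := by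
      apply Finset.eq_univ_iff_forall.mpr
      intro i
      simp only [mem_filter, mem_univ, true_and]
      exact ⟨⟨0, by omega⟩, by simp⟩
    rw [he, Finset.card_univ, Fintype.card_fin]
  rw [huZ] at hzu
  -- Z-game, lower bound
  have hzl := (zLow hn2 (((univ : Finset (Fin m)) ×ˢ (univ : Finset (Fin n))).card)
    univ univ le_rfl).1
  have hempty : (univ \ ((univ : Finset (Fin m)) ×ˢ (univ : Finset (Fin n))) :
      Finset (Fin m × Fin n)) = ∅ := by
    simp
  rw [hempty, Finset.card_univ, Finset.card_univ, Fintype.card_fin, Fintype.card_fin] at hzl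
  -- L-game, upper bound
  have hlu := (lUp hm (⟨0, by omega⟩ : Fin n)
    ((univ \ (∅ : Finset (Fin m × Fin n))).card) ∅ le_rfl).1
  have huL : uL (⟨0, by omega⟩ : Fin n) (∅ : Finset (Fin m × Fin n)) = m := by
    rw [uL]
    have he : (univ.filter fun i : Fin m =>
        ((i, (⟨0, by omega⟩ : Fin n)) : Fin m × Fin n) ∉ (∅ : Finset (Fin m × Fin n))) =
        univ := by
      apply Finset.eq_univ_iff_forall.mpr
      intro i
      simp
    rw [he, Finset.card_univ, Fintype.card_fin]
  rw [huL] at hlu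
  -- L-game, lower bound
  have hll := (lLow hm ((univ \ (∅ : Finset (Fin m × Fin n))).card) ∅ le_rfl).1
  have hrho : rhoL (∅ : Finset (Fin m × Fin n)) = 0 := by simp [rhoL]
  have hkap : kapL (∅ : Finset (Fin m × Fin n)) = 0 := by simp [kapL]
  rw [hrho, hkap] at hll
  constructor <;> omega

end Final

end ZGamePaper
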